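/- (Sign-flip reduction, Theorem 2 of the paper) For any two k-bit vectors X, Y, if SI(X) < 0 (equivalently the sign bit of X is 1), then FP(X) ≥ FP(Y) ↔ SI(Y ⊕ M) ≥ SI(X ⊕ M), where M is the mask with only the most significant bit set (i.e., X ⊕ M flips the sign bit of X, which corresponds to negating FP(X)). If SI(X) ≥ 0, then FP(X) ≥ FP(Y) ↔ SI(X) ≥ SI(Y). -/
import Mathlib


/-- Unsigned integer interpretation of a bit vector. -/
def UI {k : ℕ} (B : Fin k → Bool) : ℕ :=
  ∑ i : Fin k, if B i then 2 ^ (i : ℕ) else 0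

/-- Two's complement (signed integer) interpretation of a (k+1)-bit vector. -/
def SI {k : ℕ} (B : Fin (k + 1) → Bool) : ℤ :=
  if B (Fin.last k) then
    -2 ^ k + ∑ i : Fin k, (if B i.castSucc then (2 : ℤ) ^ (i : ℕ) else 0)
  else (UI B : ℤ)

/-- Sign bit of a floating point bit vector of length x + j + 1. -/
def signBit (j x : ℕ) (B : Fin (x + j + 1) → Bool) : Bool := B (Fin.last (x + j))

/-- Unsigned value of the exponent field. -/
def expo (j x : ℕ) (B : Fin (x + j + 1) → Bool) : ℕ :=
  ∑ i : Fin j, if B ⟨x + (i : ℕ), by have := i.isLt; omega⟩ then 2 ^ (i : ℕ) else 0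

/-- Unsigned value of the mantissa field. -/
def mant (j x : ℕ) (B : Fin (x + j + 1) → Bool) : ℕ :=
  ∑ i : Fin x, if B ⟨(i : ℕ), by have := i.isLt; omega⟩ then 2 ^ (i : ℕ) else 0

/-- The exponent bias 2^(j-1) - 1. -/
def bias (j : ℕ) : ℤ := 2 ^ (j - 1) - 1

/-- Floating point magnitude (normalized if exponent field nonzero, else denormalized). -/
def mag (j x : ℕ) (B : Fin (x + j + 1) → Bool) : ℚ :=
  if expo j x B = 0 then
    (2 : ℚ) ^ ((1 : ℤ) - bias j) * (mant j x B) * (2 : ℚ) ^ (-(x : ℤ))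
  else
    (2 : ℚ) ^ ((expo j x B : ℤ) - bias j) * (1 + (mant j x B) * (2 : ℚ) ^ (-(x : ℤ)))

/-- Floating point interpretation, as a signed-magnitude value: the sign is paired
(lexicographically) with the (sign-adjusted) magnitude, so that -0 < +0. -/
def FP (j x : ℕ) (B : Fin (x + j + 1) → Bool) : ℤ ×ₗ ℚ :=
  toLex (if signBit j x B then ((0 : ℤ), -(mag j x B)) else ((1 : ℤ), mag j x B))

/-- The floating point value +0. -/
def fpZero : ℤ ×ₗ ℚ := toLex ((1 : ℤ), (0 : ℚ))

/-- Mask with only the most significant bit set. -/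
def mask (k : ℕ) : Fin (k + 1) → Bool := fun i => decide (i = Fin.last k)

/-- Bitwise XOR of two bit vectors. -/
def xorVec {k : ℕ} (X Y : Fin k → Bool) : Fin k → Bool := fun i => xor (X i) (Y i)

/-- Negation of a floating point value: swap the sign, keep the magnitude. -/
def fpNeg (p : ℤ ×ₗ ℚ) : ℤ ×ₗ ℚ := toLex (1 - (ofLex p).1, -(ofLex p).2)


/-! ### Auxiliary lemmas -/

lemma sum_bool_lt {k : ℕ} (f : Fin k → Bool) :
    (∑ i : Fin k, if f i then 2 ^ (i:ℕ) else 0) < 2 ^ k := by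
  induction k with
  | zero => simp
  | succ n ih =>
    rw [Fin.sum_univ_castSucc]
    have h1 := ih (fun i => f i.castSucc)
    have h2 : (if f (Fin.last n) then 2 ^ ((Fin.last n : Fin (n+1)) : ℕ) else 0) ≤ 2 ^ n := by
      split <;> simp [Fin.val_last]
    simp only [Fin.coe_castSucc] at *
    have h3 : 2 ^ (n+1) = 2 ^ n + 2 ^ n := by ring
    omega

/-- Value of the low `k` bits of a `(k+1)`-bit vector. -/
def lowerVal {k : ℕ} (B : Fin (k+1) → Bool) : ℕ :=
  ∑ i : Fin k, if B i.castSucc then 2 ^ (i:ℕ) else 0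

lemma lowerVal_lt {k : ℕ} (B : Fin (k+1) → Bool) : lowerVal B < 2 ^ k :=
  sum_bool_lt _

lemma SI_eq {k : ℕ} (B : Fin (k+1) → Bool) :
    SI B = (if B (Fin.last k) then -(2^k) else 0) + lowerVal B := by
  unfold SI UI lowerVal
  split
  · push_cast
    ring
  · rw [Fin.sum_univ_castSucc]
    simp only [*, if_false]
    push_cast
    simp [*]

lemma lowerVal_eq (j x : ℕ) (B : Fin (x + j + 1) → Bool) :
    lowerVal B = mant j x B + 2 ^ x * expo j x B := by
  unfold lowerVal mant expo
  rw [Fin.sum_univ_add (f := fun i : Fin (x + j) => if B i.castSucc then 2 ^ (i:ℕ) else 0)]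
  congr 1
  rw [Finset.mul_sum]
  apply Finset.sum_congr rfl
  intro i _
  rw [mul_ite, mul_zero, ← pow_add]
  rfl

lemma mant_lt (j x : ℕ) (B : Fin (x + j + 1) → Bool) : mant j x B < 2 ^ x :=
  sum_bool_lt _

lemma frac_lt_one (x m : ℕ) (hm : m < 2^x) : (m:ℚ) * 2^(-(x:ℤ)) < 1 := by
  have h1 : (m:ℚ) < 2^(x:ℕ) := by exact_mod_cast hm
  have h2 : (0:ℚ) < 2^(x:ℕ) := by positivity
  rw [zpow_neg, zpow_natCast]
  rw [mul_inv_lt_iff₀ h2, one_mul]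
  exact h1

lemma magf_lt (b : ℤ) (x : ℕ) (e1 m1 e2 m2 : ℕ) (hm1 : m1 < 2^x) (hm2 : m2 < 2^x)
    (h : 2^x * e1 + m1 < 2^x * e2 + m2) :
    (if e1 = 0 then (2:ℚ)^((1:ℤ)-b) * m1 * 2^(-(x:ℤ)) else 2^((e1:ℤ)-b)*(1+(m1:ℚ)*2^(-(x:ℤ)))) <
    (if e2 = 0 then (2:ℚ)^((1:ℤ)-b) * m2 * 2^(-(x:ℤ)) else 2^((e2:ℤ)-b)*(1+(m2:ℚ)*2^(-(x:ℤ)))) := by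
  have two_pos : ∀ z : ℤ, (0:ℚ) < 2 ^ z := fun z => zpow_pos (by norm_num) z
  have hf1 := frac_lt_one x m1 hm1
  have hf2 := frac_lt_one x m2 hm2
  have hxpos : (0:ℚ) < 2^(-(x:ℤ)) := two_pos _
  have he : e1 ≤ e2 := by
    by_contra hc
    push_neg at hc
    have h1 : 2^x*(e2+1) ≤ 2^x*e1 := Nat.mul_le_mul_left _ (Nat.succ_le_of_lt hc)
    have h2 : 2^x*(e2+1) = 2^x*e2 + 2^x := by ring
    linarith
  rcases eq_or_lt_of_le he with he' | he'
  · subst he'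
    have hm : (m1:ℚ) < m2 := by exact_mod_cast (by linarith : m1 < m2)
    by_cases h0 : e1 = 0
    · simp only [h0, if_true]
      gcongr
    · simp only [h0, if_false]
      gcongr
  · have he2 : e2 ≠ 0 := by omega
    have key1 : (if e1 = 0 then (2:ℚ)^((1:ℤ)-b) * m1 * 2^(-(x:ℤ)) else 2^((e1:ℤ)-b)*(1+(m1:ℚ)*2^(-(x:ℤ)))) < 2^((e1:ℤ)+1-b) := by
      by_cases h0 : e1 = 0
      · subst h0
        simp only [if_true, Nat.cast_zero, zero_add]
        rw [mul_assoc]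
        have := mul_lt_mul_of_pos_left hf1 (two_pos (1-b))
        simpa using this
      · simp only [h0, if_false]
        calc (2:ℚ)^((e1:ℤ)-b)*(1+(m1:ℚ)*2^(-(x:ℤ))) < 2^((e1:ℤ)-b) * 2 := by gcongr; linarith
          _ = 2^((e1:ℤ)-b+1) := by rw [zpow_add_one₀ (by norm_num : (2:ℚ) ≠ 0)]
          _ = 2^((e1:ℤ)+1-b) := by ring_nf
    have key2 : (2:ℚ)^((e1:ℤ)+1-b) ≤ 2^((e2:ℤ)-b) := by
      apply zpow_le_zpow_right₀ one_le_two
      have : (e1:ℤ) + 1 ≤ e2 := by exact_mod_cast he'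
      linarith
    have key3 : (2:ℚ)^((e2:ℤ)-b) ≤ (if e2 = 0 then (2:ℚ)^((1:ℤ)-b) * m2 * 2^(-(x:ℤ)) else 2^((e2:ℤ)-b)*(1+(m2:ℚ)*2^(-(x:ℤ)))) := by
      simp only [he2, if_false]
      have : (0:ℚ) ≤ (m2:ℚ) * 2^(-(x:ℤ)) := by positivity
      nlinarith [two_pos ((e2:ℤ)-b)]
    calc _ < (2:ℚ)^((e1:ℤ)+1-b) := key1
      _ ≤ 2^((e2:ℤ)-b) := key2
      _ ≤ _ := key3

lemma mag_lt (j x : ℕ) (B1 B2 : Fin (x + j + 1) → Bool)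
    (h : lowerVal B1 < lowerVal B2) : mag j x B1 < mag j x B2 := by
  rw [lowerVal_eq j x B1, lowerVal_eq j x B2] at h
  unfold mag
  exact magf_lt (bias j) x _ _ _ _ (mant_lt j x B1) (mant_lt j x B2) (by linarith)

lemma val_unique (x e1 m1 e2 m2 : ℕ) (hm1 : m1 < 2^x) (hm2 : m2 < 2^x)
    (h : m1 + 2^x*e1 = m2 + 2^x*e2) : e1 = e2 ∧ m1 = m2 := by
  have he : e1 = e2 := by
    rcases Nat.lt_trichotomy e1 e2 with hc | hc | hc
    · have h1 : 2^x*(e1+1) ≤ 2^x*e2 := Nat.mul_le_mul_left _ (Nat.succ_le_of_lt hc)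
      have h2 : 2^x*(e1+1) = 2^x*e1 + 2^x := by ring
      linarith
    · exact hc
    · have h1 : 2^x*(e2+1) ≤ 2^x*e1 := Nat.mul_le_mul_left _ (Nat.succ_le_of_lt hc)
      have h2 : 2^x*(e2+1) = 2^x*e2 + 2^x := by ring
      linarith
  subst he
  exact ⟨rfl, by omega⟩

lemma mag_le_iff (j x : ℕ) (B1 B2 : Fin (x + j + 1) → Bool) :
    mag j x B1 ≤ mag j x B2 ↔ lowerVal B1 ≤ lowerVal B2 := by
  constructor
  · intro hle
    by_contra hc
    push_neg at hc
    exact absurd hle (not_le.mpr (mag_lt j x B2 B1 hc))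
  · intro hle
    rcases eq_or_lt_of_le hle with heq | hlt
    · rw [lowerVal_eq j x B1, lowerVal_eq j x B2] at heq
      obtain ⟨he, hm⟩ := val_unique x _ _ _ _ (mant_lt j x B1) (mant_lt j x B2) heq
      unfold mag
      rw [he, hm]
    · exact le_of_lt (mag_lt j x B1 B2 hlt)

lemma xorVec_mask_ne {k : ℕ} (B : Fin (k+1) → Bool) (i : Fin (k+1)) (h : i ≠ Fin.last k) :
    xorVec B (mask k) i = B i := by
  simp [xorVec, mask, h]

lemma xorVec_mask_last {k : ℕ} (B : Fin (k+1) → Bool) :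
    xorVec B (mask k) (Fin.last k) = !B (Fin.last k) := by
  simp [xorVec, mask]

lemma lowerVal_xor {k : ℕ} (B : Fin (k+1) → Bool) :
    lowerVal (xorVec B (mask k)) = lowerVal B := by
  unfold lowerVal
  apply Finset.sum_congr rfl
  intro i _
  rw [xorVec_mask_ne B _ (Fin.ne_of_lt (Fin.castSucc_lt_last i))]

/-- Sign-flip reduction, Theorem 2 of the paper. -/
theorem flint_sign_flip (j x : ℕ) (hj : 1 ≤ j) (X Y : Fin (x + j + 1) → Bool) :
    (SI X < 0 →
      (FP j x X ≥ FP j x Y ↔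
        SI (xorVec Y (mask (x + j))) ≥ SI (xorVec X (mask (x + j))))) ∧
    (SI X ≥ 0 → (FP j x X ≥ FP j x Y ↔ SI X ≥ SI Y)) := by
  have hlX : (lowerVal X : ℤ) < 2 ^ (x+j) := by exact_mod_cast lowerVal_lt X
  have hlY : (lowerVal Y : ℤ) < 2 ^ (x+j) := by exact_mod_cast lowerVal_lt Y
  have hlX0 : (0:ℤ) ≤ (lowerVal X : ℤ) := Int.natCast_nonneg _
  have hlY0 : (0:ℤ) ≤ (lowerVal Y : ℤ) := Int.natCast_nonneg _
  have hpow : (0:ℤ) < 2 ^ (x+j) := by positivity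
  have sX := SI_eq X
  have sY := SI_eq Y
  have sXM := SI_eq (xorVec X (mask (x+j)))
  have sYM := SI_eq (xorVec Y (mask (x+j)))
  rw [xorVec_mask_last, lowerVal_xor] at sXM
  rw [xorVec_mask_last, lowerVal_xor] at sYM
  cases hX : X (Fin.last (x+j)) with
  | true =>
    rw [hX] at sX sXM
    simp at sX sXM
    constructor
    · intro _
      cases hY : Y (Fin.last (x+j)) with
      | true =>
        rw [hY] at sYM
        simp at sYM
        rw [sXM, sYM, ge_iff_le]
        rw [show FP j x Y ≤ FP j x X ↔ mag j x X ≤ mag j x Y by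
          simp only [FP, signBit, hX, hY, if_true, Prod.Lex.le_iff]
          simp]
        rw [mag_le_iff]
        exact ⟨fun h => by exact_mod_cast h, fun h => by exact_mod_cast h⟩
      | false =>
        rw [hY] at sYM
        simp at sYM
        constructor
        · intro h
          exfalso
          rw [ge_iff_le] at h
          simp only [FP, signBit, hX, hY, Prod.Lex.le_iff] at h
          simp at h
        · intro h
          exfalso
          rw [sXM, sYM, ge_iff_le] at h
          linarith
    · intro h
      exfalso
      rw [sX] at h
      linarith
  | false =>
    rw [hX] at sX sXM
    simp at sX sXM
    constructor
    · intro h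
      exfalso
      rw [sX] at h
      linarith
    · intro _
      cases hY : Y (Fin.last (x+j)) with
      | true =>
        rw [hY] at sY
        simp at sY
        constructor
        · intro _
          rw [sX, sY, ge_iff_le]
          linarith
        · intro _
          rw [ge_iff_le]
          simp only [FP, signBit, hX, hY, Prod.Lex.le_iff]
          simp
      | false =>
        rw [hY] at sY
        simp at sY
        rw [sX, sY, ge_iff_le]
        rw [show FP j x Y ≤ FP j x X ↔ mag j x Y ≤ mag j x X by
          simp only [FP, signBit, hX, hY, Prod.Lex.le_iff]
          simp]
        rw [mag_le_iff]
        exact ⟨fun h => by exact_mod_cast h, fun h => by exact_mod_cast h⟩
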